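/- arXiv:2408.00479 — 2 statements merged into one kernel-verified Lean document; each statement's English description precedes it below -/
import Mathlib

section
/- Let f : [0,1] → ℝ be twice differentiable with values in [0, π/2], let g(t) := cos(f(t)), and suppose g''(t) ≤ -c for some constant c ≥ 0 and all t, with 0 < g(t) ≤ 1. Then (f²)''(t) ≥ 2c for all t where f(t) > 0. -/
open Real Set

theorem stmt_1 (f : ℝ → ℝ) (c : ℝ) (hc : 0 ≤ c)
    (hf : ∀ t ∈ Icc (0:ℝ) 1, DifferentiableAt ℝ f t)
    (hf' : ∀ t ∈ Icc (0:ℝ) 1, DifferentiableAt ℝ (deriv f) t)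
    (hrange : ∀ t ∈ Icc (0:ℝ) 1, f t ∈ Icc 0 (Real.pi/2))
    (hg'' : ∀ t ∈ Icc (0:ℝ) 1, deriv (deriv (fun s => Real.cos (f s))) t ≤ -c)
    (hgpos : ∀ t ∈ Icc (0:ℝ) 1, 0 < Real.cos (f t))
    (hgle : ∀ t ∈ Icc (0:ℝ) 1, Real.cos (f t) ≤ 1) :
    ∀ t ∈ Icc (0:ℝ) 1, 0 < f t → 2 * c ≤ deriv (deriv (fun s => (f s)^2)) t := by
  intro t ht hft
  have hfd : DifferentiableAt ℝ f t := hf t ht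
  have ha2 : f t ∈ Icc 0 (Real.pi/2) := hrange t ht
  have hcos : 0 < Real.cos (f t) := hgpos t ht
  have haπ : f t < Real.pi / 2 := by
    rcases lt_or_eq_of_le ha2.2 with h | h
    · exact h
    · rw [h] at hcos; simp [Real.cos_pi_div_two] at hcos
  have hev : f ⁻¹' (Ioo 0 (Real.pi/2)) ∈ nhds t :=
    hfd.continuousAt.preimage_mem_nhds (Ioo_mem_nhds hft haπ)
  obtain ⟨U, hUsub, hUopen, htU⟩ := mem_nhds_iff.mp hev
  have hpi : (0:ℝ) < Real.pi := Real.pi_pos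
  -- Claim A: on U, deriv (f^2) = (-2 f / sin f) * deriv (cos ∘ f)
  have claimA : ∀ s ∈ U, deriv (fun u => (f u)^2) s =
      (-2 * f s / Real.sin (f s)) * deriv (fun u => Real.cos (f u)) s := by
    intro s hsU
    have hs : f s ∈ Ioo 0 (Real.pi/2) := hUsub hsU
    have hsin : 0 < Real.sin (f s) :=
      Real.sin_pos_of_pos_of_lt_pi hs.1 (by linarith [hs.2])
    by_cases hds : DifferentiableAt ℝ f s
    · have h1 : HasDerivAt (fun u => Real.cos (f u)) (-Real.sin (f s) * deriv f s) s :=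
        (Real.hasDerivAt_cos (f s)).comp s hds.hasDerivAt
      have h2 : HasDerivAt (fun u => (f u)^2) ((2:ℕ) * f s ^ 1 * deriv f s) s :=
        hds.hasDerivAt.pow 2
      rw [h1.deriv, h2.deriv]
      field_simp
      ring
    · -- neither f^2 nor cos∘f is differentiable at s
      have hcs : Real.cos (f s) < 1 := by
        have := Real.cos_lt_cos_of_nonneg_of_le_pi (le_refl 0)
          (by linarith [hs.2]) hs.1
        simpa using this
      have hcs' : (0:ℝ) < Real.cos (f s) :=
        Real.cos_pos_of_mem_Ioo ⟨by linarith [hs.1], hs.2⟩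
      have hG0 : ¬ DifferentiableAt ℝ (fun u => Real.cos (f u)) s := by
        intro h
        apply hds
        have harc : DifferentiableAt ℝ Real.arccos (Real.cos (f s)) :=
          Real.differentiableAt_arccos.mpr ⟨by linarith, by linarith⟩
        have hcomp := harc.comp s h
        refine hcomp.congr_of_eventuallyEq ?_
        filter_upwards [hUopen.mem_nhds hsU] with u hu
        have hu' : f u ∈ Ioo 0 (Real.pi/2) := hUsub hu
        simp only [Function.comp]
        rw [Real.arccos_cos hu'.1.le (by linarith [hu'.2])]
      have hF0 : ¬ DifferentiableAt ℝ (fun u => (f u)^2) s := by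
        intro h
        apply hds
        have hsq : DifferentiableAt ℝ Real.sqrt ((f s)^2) := by
          have : ((f s)^2) ≠ 0 := pow_ne_zero 2 (ne_of_gt hs.1)
          exact (Real.hasDerivAt_sqrt this).differentiableAt
        have hcomp := hsq.comp s h
        refine hcomp.congr_of_eventuallyEq ?_
        filter_upwards [hUopen.mem_nhds hsU] with u hu
        have hu' : f u ∈ Ioo 0 (Real.pi/2) := hUsub hu
        simp only [Function.comp]
        rw [Real.sqrt_sq hu'.1.le]
      rw [deriv_zero_of_not_differentiableAt hG0,
        deriv_zero_of_not_differentiableAt hF0, mul_zero]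
  have key : deriv (deriv (fun s => (f s)^2)) t =
      deriv (fun s => (-2 * f s / Real.sin (f s)) * deriv (fun u => Real.cos (f u)) s) t := by
    apply Filter.EventuallyEq.deriv_eq
    filter_upwards [hUopen.mem_nhds htU] with s hs using claimA s hs
  have hsin : 0 < Real.sin (f t) :=
    Real.sin_pos_of_pos_of_lt_pi hft (by linarith)
  -- ψ := -2 f / sin f is differentiable at t
  have hψ : HasDerivAt (fun s => -2 * f s / Real.sin (f s))
      (((-2 * deriv f t) * Real.sin (f t) - (-2 * f t) * (Real.cos (f t) * deriv f t)) /
        (Real.sin (f t))^2) t := by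
    exact ((hfd.hasDerivAt.const_mul (-2)).div
      ((Real.hasDerivAt_sin (f t)).comp t hfd.hasDerivAt) hsin.ne')
  by_cases hd2 : DifferentiableAt ℝ (deriv (fun u => Real.cos (f u))) t
  · have hGt : HasDerivAt (fun u => Real.cos (f u)) (-Real.sin (f t) * deriv f t) t :=
      (Real.hasDerivAt_cos (f t)).comp t hfd.hasDerivAt
    have hprod := hψ.mul hd2.hasDerivAt
    rw [key, show (fun s => -2 * f s / Real.sin (f s) * deriv (fun u => Real.cos (f u)) s) = ((fun s => -2 * f s / Real.sin (f s)) * deriv fun u => Real.cos (f u)) from rfl, hprod.deriv, hGt.deriv]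
    have hG2 := hg'' t ht
    have htan : f t * Real.cos (f t) < Real.sin (f t) := by
      have h := Real.lt_tan hft haπ
      rw [Real.tan_eq_sin_div_cos] at h
      exact (lt_div_iff₀ hcos).mp h
    have hsle : Real.sin (f t) ≤ f t := Real.sin_le hft.le
    set A := f t
    set S := Real.sin (f t)
    set C := Real.cos (f t)
    set D := deriv f t
    set X := deriv (deriv (fun u => Real.cos (f u))) t
    have h1 : (-2 * D * S - -2 * A * (C * D)) / S ^ 2 * (-S * D)
        = 2 * D^2 * (S - A * C) / S := by field_simp; ring
    rw [h1]
    have t1 : 0 ≤ 2 * D^2 * (S - A * C) / S := by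
      apply div_nonneg _ hsin.le
      nlinarith
    have t2 : 2 * c ≤ -2 * A / S * X := by
      have hAS : 1 ≤ A / S := (one_le_div hsin).mpr hsle
      have h3 : -2 * A / S * X = 2 * (A / S) * (-X) := by ring
      have h4 : c ≤ -X := by linarith
      have h5 : 2 * (A / S) * c ≤ 2 * (A / S) * (-X) := by
        apply mul_le_mul_of_nonneg_left h4
        positivity
      have h6 : 2 * c ≤ 2 * (A / S) * c := by
        have := mul_le_mul_of_nonneg_right hAS hc
        linarith
      rw [h3]
      linarith
    linarith
  · -- junk case: both second derivatives are 0 and c = 0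
    have hFd : ¬ DifferentiableAt ℝ (deriv (fun s => (f s)^2)) t := by
      intro hdF
      apply hd2
      have heq : (fun s => deriv (fun u => Real.cos (f u)) s) =ᶠ[nhds t]
          fun s => deriv (fun u => (f u)^2) s * (Real.sin (f s) / (-2 * f s)) := by
        filter_upwards [hUopen.mem_nhds htU] with s hs
        have hs' : f s ∈ Ioo 0 (Real.pi/2) := hUsub hs
        have hsin' : 0 < Real.sin (f s) :=
          Real.sin_pos_of_pos_of_lt_pi hs'.1 (by linarith [hs'.2])
        have hfs0 : f s ≠ 0 := ne_of_gt hs'.1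
        rw [claimA s hs]
        field_simp
      have hdiff : DifferentiableAt ℝ
          (fun s => deriv (fun u => (f u)^2) s * (Real.sin (f s) / (-2 * f s))) t := by
        apply hdF.mul
        apply DifferentiableAt.div
        · exact (Real.differentiable_sin _).comp t hfd
        · exact hfd.const_mul _
        · simp only [neg_mul, ne_eq, neg_eq_zero]
          positivity
      exact hdiff.congr_of_eventuallyEq heq
    have h0F : deriv (deriv (fun s => (f s)^2)) t = 0 :=
      deriv_zero_of_not_differentiableAt hFd
    have h0G : deriv (deriv (fun u => Real.cos (f u))) t = 0 :=
      deriv_zero_of_not_differentiableAt hd2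
    have := hg'' t ht
    rw [h0G] at this
    rw [h0F]
    linarith
end

section
/- Let (X,d_X) and (Y,d_Y) be metric spaces, Ω ⊂ X, u : Ω → Y α-Hölder continuous with constant A (i.e. d_Y(u(x),u(y)) ≤ A d_X(x,y)^α, 0 < α ≤ 1), p ≥ 2, t > 0. For x ∈ Ω define f_t(x) := inf_y [d_X(x,y)^p/(p t^(p-1)) - F(d_Y(u(x),u(y)))] with F(s) = 2 sin(s/2) + 4 sin²(s/2), and suppose the infimum is attained at y_t with d_Y(u(x),u(y_t)) ≤ π. Set L_t(x) := d_X(x, y_t) and D_t(x) := L_t(x)^p/(p t^(p-1)) - f_t(x). Then L_t(x) ≤ C t^β, D_t(x) ≤ C' t^{αβ}, and -f_t(x) ≤ C' t^{αβ}, where β = (p-1)/(p-α) and C, C' depend only on p, α and A. -/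
noncomputable def F (t : ℝ) : ℝ := 2 * Real.sin (t/2) + 4 * (Real.sin (t/2))^2

lemma F_le_three_mul {s : ℝ} (hs : 0 ≤ s) : F s ≤ 3 * s := by
  have habs : |Real.sin (s/2)| ≤ s/2 := by
    calc |Real.sin (s/2)| ≤ |s/2| := Real.abs_sin_le_abs
    _ = s/2 := abs_of_nonneg (by linarith)
  have h1 : Real.sin (s/2) ≤ s/2 := (le_abs_self _).trans habs
  have h2 : (Real.sin (s/2))^2 ≤ s/2 := by
    calc (Real.sin (s/2))^2 = |Real.sin (s/2)|^2 := (sq_abs _).symm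
    _ ≤ |Real.sin (s/2)| * 1 := by
        rw [sq]
        exact mul_le_mul_of_nonneg_left (Real.abs_sin_le_one _) (abs_nonneg _)
    _ ≤ s/2 := by rw [mul_one]; exact habs
  unfold F; nlinarith

lemma F_nonneg_aux {s : ℝ} : 0 ≤ s → s ≤ Real.pi → 0 ≤ F s := by
  intro h0 hπ
  have : 0 ≤ Real.sin (s/2) := Real.sin_nonneg_of_nonneg_of_le_pi (by linarith)
    (by linarith [Real.pi_pos])
  unfold F; nlinarith

theorem stmt_7 (p α A : ℝ) (hp : 2 ≤ p) (hα : 0 < α) (hα1 : α ≤ 1) (hA : 0 < A) :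
    ∃ C C' : ℝ, 0 < C ∧ 0 < C' ∧
      ∀ (X Y : Type) [MetricSpace X] [MetricSpace Y] (Ω : Set X) (u : X → Y),
        (∀ x ∈ Ω, ∀ y ∈ Ω, dist (u x) (u y) ≤ A * dist x y ^ α) →
        ∀ t : ℝ, 0 < t → ∀ x ∈ Ω, ∀ yt ∈ Ω,
          (∀ y ∈ Ω, dist x yt ^ p / (p * t ^ (p - 1)) - F (dist (u x) (u yt))
              ≤ dist x y ^ p / (p * t ^ (p - 1)) - F (dist (u x) (u y))) →
          dist (u x) (u yt) ≤ Real.pi →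
          dist x yt ≤ C * t ^ ((p - 1) / (p - α)) ∧
          F (dist (u x) (u yt)) ≤ C' * t ^ (α * (p - 1) / (p - α)) ∧
          -(dist x yt ^ p / (p * t ^ (p - 1)) - F (dist (u x) (u yt)))
              ≤ C' * t ^ (α * (p - 1) / (p - α)) := by
  have hpα : 0 < p - α := by linarith
  set C : ℝ := (3*A*p) ^ ((p-α)⁻¹) with hC
  have hCpos : 0 < C := Real.rpow_pos_of_pos (by positivity) _
  set C' : ℝ := 3*A*C ^ α with hC'
  have hC'pos : 0 < C' := by positivity
  refine ⟨C, C', hCpos, hC'pos, ?_⟩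
  intro X Y _ _ Ω u hHold t ht x hx yt hyt hmin hπ
  set L : ℝ := dist x yt with hLdef
  set s : ℝ := dist (u x) (u yt) with hsdef
  have hL0 : 0 ≤ L := dist_nonneg
  have hs0 : 0 ≤ s := dist_nonneg
  have hP : 0 < p * t ^ (p-1) := by
    have := Real.rpow_pos_of_pos ht (p-1); positivity
  -- minimality at y = x
  have hkey : L ^ p / (p * t ^ (p-1)) ≤ F s := by
    have h := hmin x hx
    rw [dist_self, dist_self] at h
    have hz : (0:ℝ) ^ p = 0 := Real.zero_rpow (by positivity)
    have hF0 : F 0 = 0 := by simp [F]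
    rw [hz, hF0, zero_div] at h
    linarith
  have hFs3 : F s ≤ 3 * (A * L ^ α) := by
    calc F s ≤ 3 * s := F_le_three_mul hs0
    _ ≤ 3 * (A * L ^ α) := by
        have := hHold x hx yt hyt; linarith
  have hLα0 : 0 ≤ L ^ α := Real.rpow_nonneg hL0 _
  -- L bound
  have hLbound : L ≤ C * t ^ ((p-1)/(p-α)) := by
    rcases eq_or_lt_of_le hL0 with h0 | hLpos
    · rw [← h0]
      positivity
    · have h1 : L ^ p ≤ 3 * A * L ^ α * (p * t ^ (p-1)) := by
        rw [div_le_iff₀ hP] at hkey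
        calc L ^ p ≤ F s * (p * t ^ (p-1)) := hkey
        _ ≤ 3 * (A * L ^ α) * (p * t ^ (p-1)) :=
            mul_le_mul_of_nonneg_right hFs3 hP.le
        _ = 3 * A * L ^ α * (p * t ^ (p-1)) := by ring
      have h2 : L ^ (p - α) ≤ 3 * A * p * t ^ (p-1) := by
        have hsplit : L ^ p = L ^ (p - α) * L ^ α := by
          rw [← Real.rpow_add hLpos]; ring_nf
        rw [hsplit] at h1
        have hLαpos : 0 < L ^ α := Real.rpow_pos_of_pos hLpos _
        have := (mul_le_mul_iff_of_pos_right hLαpos).mp (by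
          calc L ^ (p-α) * L ^ α ≤ 3 * A * L ^ α * (p * t ^ (p-1)) := h1
          _ = (3 * A * p * t ^ (p-1)) * L ^ α := by ring)
        exact this
      have h3 := Real.rpow_le_rpow (Real.rpow_nonneg hL0 _) h2
        (by positivity : (0:ℝ) ≤ (p-α)⁻¹)
      rwa [← Real.rpow_mul hL0, mul_inv_cancel₀ hpα.ne',
        Real.rpow_one, Real.mul_rpow (by positivity) (Real.rpow_nonneg ht.le _),
        ← Real.rpow_mul ht.le,
        show (p-1) * (p-α)⁻¹ = (p-1)/(p-α) by rw [div_eq_mul_inv]] at h3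
  -- F bound
  have hFbound : F s ≤ C' * t ^ (α * (p-1) / (p-α)) := by
    calc F s ≤ 3 * (A * L ^ α) := hFs3
    _ ≤ 3 * (A * (C * t ^ ((p-1)/(p-α))) ^ α) := by
        have := Real.rpow_le_rpow hL0 hLbound hα.le
        nlinarith
    _ = C' * t ^ (α * (p-1) / (p-α)) := by
        rw [Real.mul_rpow hCpos.le (Real.rpow_nonneg ht.le _),
          ← Real.rpow_mul ht.le, hC',
          show (p-1)/(p-α) * α = α * (p-1) / (p-α) by ring]
        ring
  refine ⟨hLbound, hFbound, ?_⟩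
  have : 0 ≤ L ^ p / (p * t ^ (p-1)) := by positivity
  linarith
end
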